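/- Let G be a finite group acting on a finite set S, and let ℤ[S] be the associated permutation G-module (free abelian group on S with G permuting the basis). Then the first group cohomology H^1(G, ℤ[S]) vanishes. -/

import Mathlib

open groupCohomology Finsupp

lemma aux_stab {G : Type} [Group G] [Finite G] {S : Type} [MulAction G S]
    (F : G → (S →₀ ℤ)) (hco : ∀ g h : G, ∀ s : S, F (g * h) s = F h (g⁻¹ • s) + F g s)
    (h1 : F 1 = 0) (u : G) (s₀ : S) (hu : u • s₀ = s₀) :
    F u s₀ = 0 := by
  have hinv : u⁻¹ • s₀ = s₀ := by rw [inv_smul_eq_iff, hu]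
  have hpow : ∀ n : ℕ, F (u ^ n) s₀ = n * F u s₀ := by
    intro n
    induction n with
    | zero => simp [pow_zero, h1]
    | succ n ih =>
      calc F (u ^ (n+1)) s₀ = F (u * u ^ n) s₀ := by rw [pow_succ']
        _ = F (u ^ n) (u⁻¹ • s₀) + F u s₀ := hco u (u ^ n) s₀
        _ = n * F u s₀ + F u s₀ := by rw [hinv, ih]
        _ = (n + 1 : ℕ) * F u s₀ := by push_cast; ring
  have h := hpow (orderOf u)
  rw [pow_orderOf_eq_one, h1] at h
  simp only [Finsupp.zero_apply] at h
  rcases mul_eq_zero.1 h.symm with h' | h'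
  · exact absurd (Nat.cast_eq_zero.1 h') (orderOf_pos u).ne'
  · exact h'

lemma aux_cobound {G : Type} [Group G] [Finite G] {S : Type} [Finite S] [MulAction G S]
    (F : G → (S →₀ ℤ)) (hco : ∀ g h : G, ∀ s : S, F (g * h) s = F h (g⁻¹ • s) + F g s)
    (h1 : F 1 = 0) : ∃ b : S → ℤ, ∀ (g : G) (s : S), F g s = b (g⁻¹ • s) - b s := by
  classical
  let q : S → S := fun s => (Quotient.mk (MulAction.orbitRel G S) s).out
  have hq : ∀ s, q s ∈ MulAction.orbit G s := fun s =>
    (Quotient.mk_out (s := MulAction.orbitRel G S) s : MulAction.orbitRel G S (q s) s)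
  choose t ht0 using fun s : S => (hq s : ∃ t : G, t • s = q s)
  have ht : ∀ s : S, t s • s = q s := ht0
  have hwd : ∀ (s : S) (k : G), k • s = q s → F k (q s) = F (t s) (q s) := by
    intro s k hk
    have hts : (t s)⁻¹ • q s = s := by rw [← ht s, inv_smul_smul]
    have hu : (k * (t s)⁻¹) • q s = q s := by rw [mul_smul, hts, hk]
    have hinv : (k * (t s)⁻¹)⁻¹ • q s = q s := by rw [inv_smul_eq_iff, hu]
    have hk' : k = (k * (t s)⁻¹) * t s := by group
    have hstab := aux_stab F hco h1 (k * (t s)⁻¹) (q s) hu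
    rw [hk', hco, hinv, hstab, add_zero]
  refine ⟨fun s => F (t s) (q s), fun g s => ?_⟩
  have hqq : q (g⁻¹ • s) = q s := by
    have h2 : (Quotient.mk (MulAction.orbitRel G S) (g⁻¹ • s)) =
        (Quotient.mk (MulAction.orbitRel G S) s) := Quotient.sound ⟨g⁻¹, rfl⟩
    simp only [q, h2]
  have hk : (t s * g) • (g⁻¹ • s) = q (g⁻¹ • s) := by
    rw [hqq, ← mul_smul, mul_assoc, mul_inv_cancel, mul_one, ht]
  have hb1 := hwd (g⁻¹ • s) (t s * g) hk
  rw [hqq] at hb1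
  have hts : (t s)⁻¹ • q s = s := by rw [← ht s, inv_smul_smul]
  have : F (t s * g) (q s) = F g s + F (t s) (q s) := by
    rw [hco, hts]
  show F g s = F (t (g⁻¹ • s)) (q (g⁻¹ • s)) - F (t s) (q s)
  rw [hqq, ← hb1, this]
  ring

lemma ofMulAction_coeff_apply {G : Type} [Group G] {S : Type} [MulAction G S] (g : G)
    (x : MonoidAlgebra ℤ S) (s : S) :
    (Representation.ofMulAction ℤ G S g x).coeff s = x.coeff (g⁻¹ • s) := by
  rw [Representation.ofMulAction_def]
  have : s = g • (g⁻¹ • s) := (smul_inv_smul g s).symm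
  conv_lhs => rw [this]
  exact Finsupp.mapDomain_apply (MulAction.injective g) _ _

theorem stmt_0 (G : Type) [Group G] [Finite G] (S : Type) [Finite S] [MulAction G S] :
    Subsingleton (groupCohomology (Rep.ofMulAction ℤ G S) 1) := by
  classical
  have : Fintype S := Fintype.ofFinite S
  set A := Rep.ofMulAction ℤ G S with hA
  have key : ∀ f : cocycles₁ A, (f : G → A) ∈ coboundaries₁ A := by
    intro f
    set F : G → (S →₀ ℤ) := fun g => ((f : G → A) g).coeff with hF
    have hco : ∀ g h : G, ∀ s : S, F (g * h) s = F h (g⁻¹ • s) + F g s := by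
      intro g h s
      have h0 := (mem_cocycles₁_iff (f : G → A)).1 f.2 g h
      have h1 : F (g * h) = ((Representation.ofMulAction ℤ G S g) ((f : G → A) h)).coeff + F g :=
        congrArg MonoidAlgebra.coeff h0
      rw [h1]
      simp only [Finsupp.add_apply]
      rw [ofMulAction_coeff_apply]
    have h1 : F 1 = 0 := congrArg MonoidAlgebra.coeff (cocycles₁_map_one f)
    obtain ⟨b, hb⟩ := aux_cobound F hco h1
    let x : MonoidAlgebra ℤ S := MonoidAlgebra.ofCoeff (Finsupp.equivFunOnFinite.symm b)
    refine ⟨x, funext fun g => ?_⟩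
    show (Representation.ofMulAction ℤ G S g) x - x = (f : G → A) g
    apply MonoidAlgebra.coeff_injective
    ext s
    simp only [MonoidAlgebra.coeff_sub, Finsupp.sub_apply]
    rw [ofMulAction_coeff_apply]
    have hx : ∀ u, x.coeff u = b u := fun u => rfl
    rw [hx, hx]
    exact (hb g s).symm
  refine subsingleton_of_forall_eq 0 fun a => ?_
  exact H1_induction_on a fun x => (H1π_eq_zero_iff x).2 (key x)
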